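/- Fix Q₁ = {d : -ξ ≤ d ≤ -d̂} and Q₂ = {d : d̂ ≤ d ≤ ξ} with 0 < d̂ ≤ ξ. Then P(Q₁,E) ∩ P(Q₂,E) = {x ∈ ℝ^n : |(Σ_{j∈N_i} x_j)/|N_i| - x_i| ≤ ξ - d̂ for all i ∈ Γ}, where P(Q,E) = ⋃_{d∈Q} P(d,E). In particular, if d̂ = ξ then P(Q₁,E) ∩ P(Q₂,E) = {π·𝟏 : π ∈ ℝ}. -/

import Mathlib

/-- with Q₁ = [-ξ,-d̂] and Q₂ = [d̂,ξ] (0 < d̂ ≤ ξ),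
P(Q₁,E) ∩ P(Q₂,E) = {x : |avg - x_i| ≤ ξ - d̂ for all i}; in particular for
d̂ = ξ this intersection is exactly the set of constant vectors. -/
theorem inter_P_Q1_Q2
    (n : ℕ) (hn : 2 ≤ n) (G : SimpleGraph (Fin n)) [DecidableRel G.Adj]
    (hconn : G.Connected) (hN : ∀ i, (G.neighborFinset i).Nonempty)
    (ξ dhat : ℝ) (hξ : 0 < ξ) (hdhat : 0 < dhat) (hdhatle : dhat ≤ ξ) :
    ((⋃ d ∈ {d : Fin n → Fin n → ℝ | ∀ i j, -ξ ≤ d i j ∧ d i j ≤ -dhat},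
        {x : Fin n → ℝ | ∀ i : Fin n,
          -(∑ j ∈ G.neighborFinset i, d i j) / ((G.neighborFinset i).card : ℝ) - ξ ≤
            (∑ j ∈ G.neighborFinset i, x j) / ((G.neighborFinset i).card : ℝ) - x i ∧
          (∑ j ∈ G.neighborFinset i, x j) / ((G.neighborFinset i).card : ℝ) - x i ≤
            -(∑ j ∈ G.neighborFinset i, d i j) / ((G.neighborFinset i).card : ℝ) + ξ}) ∩
     (⋃ d ∈ {d : Fin n → Fin n → ℝ | ∀ i j, dhat ≤ d i j ∧ d i j ≤ ξ},
        {x : Fin n → ℝ | ∀ i : Fin n,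
          -(∑ j ∈ G.neighborFinset i, d i j) / ((G.neighborFinset i).card : ℝ) - ξ ≤
            (∑ j ∈ G.neighborFinset i, x j) / ((G.neighborFinset i).card : ℝ) - x i ∧
          (∑ j ∈ G.neighborFinset i, x j) / ((G.neighborFinset i).card : ℝ) - x i ≤
            -(∑ j ∈ G.neighborFinset i, d i j) / ((G.neighborFinset i).card : ℝ) + ξ}))
      = {x : Fin n → ℝ | ∀ i : Fin n,
          |(∑ j ∈ G.neighborFinset i, x j) / ((G.neighborFinset i).card : ℝ) - x i| ≤ ξ - dhat}
    ∧ (dhat = ξ →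
        {x : Fin n → ℝ | ∀ i : Fin n,
          |(∑ j ∈ G.neighborFinset i, x j) / ((G.neighborFinset i).card : ℝ) - x i| ≤ ξ - dhat}
          = {x : Fin n → ℝ | ∃ π : ℝ, x = fun _ => π}) := by
  have hcard : ∀ i : Fin n, (0:ℝ) < ((G.neighborFinset i).card : ℝ) := fun i => by
    exact_mod_cast Finset.card_pos.mpr (hN i)
  constructor
  · ext x
    simp only [Set.mem_inter_iff, Set.mem_iUnion, Set.mem_setOf_eq]
    constructor
    · rintro ⟨⟨d1, hd1, hx1⟩, ⟨d2, hd2, hx2⟩⟩ i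
      set c : ℝ := ((G.neighborFinset i).card : ℝ) with hc
      have hs1 : (∑ j ∈ G.neighborFinset i, d1 i j) ≤ (-dhat) * c := by
        calc (∑ j ∈ G.neighborFinset i, d1 i j)
            ≤ ∑ _j ∈ G.neighborFinset i, (-dhat) :=
              Finset.sum_le_sum (fun j _ => (hd1 i j).2)
          _ = (-dhat) * c := by rw [Finset.sum_const, nsmul_eq_mul]; ring
      have hs2 : dhat * c ≤ (∑ j ∈ G.neighborFinset i, d2 i j) := by
        calc dhat * c = ∑ _j ∈ G.neighborFinset i, dhat := by
              rw [Finset.sum_const, nsmul_eq_mul]; ring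
          _ ≤ ∑ j ∈ G.neighborFinset i, d2 i j :=
              Finset.sum_le_sum (fun j _ => (hd2 i j).1)
      have h1 : dhat ≤ -(∑ j ∈ G.neighborFinset i, d1 i j) / c := by
        rw [le_div_iff₀ (hcard i)]; linarith
      have h2 : -(∑ j ∈ G.neighborFinset i, d2 i j) / c ≤ -dhat := by
        rw [div_le_iff₀ (hcard i)]; linarith
      have l1 := (hx1 i).1
      have l2 := (hx2 i).2
      rw [abs_le]
      constructor <;> linarith
    · intro hx
      have hconst : ∀ (i : Fin n) (a : ℝ),
          (∑ _j ∈ G.neighborFinset i, a) = a * ((G.neighborFinset i).card : ℝ) := by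
        intro i a; rw [Finset.sum_const, nsmul_eq_mul]; ring
      refine ⟨⟨fun _ _ => -dhat, fun i j => ⟨by simp only; linarith, le_rfl⟩, fun i => ?_⟩,
              ⟨fun _ _ => dhat, fun i j => ⟨le_rfl, by simp only; linarith⟩, fun i => ?_⟩⟩ <;>
      · simp only
        have habs := abs_le.mp (hx i)
        have hne : ((G.neighborFinset i).card : ℝ) ≠ 0 := ne_of_gt (hcard i)
        rw [hconst, neg_mul_eq_neg_mul, mul_div_assoc, div_self hne, mul_one]
        constructor <;> linarith [habs.1, habs.2]
  · intro heq
    ext x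
    simp only [Set.mem_setOf_eq]
    subst heq
    constructor
    · intro hx
      have havg : ∀ i, (∑ j ∈ G.neighborFinset i, x j) = x i * ((G.neighborFinset i).card : ℝ) := by
        intro i
        have := hx i
        rw [sub_self] at this
        have h0 : (∑ j ∈ G.neighborFinset i, x j) / ((G.neighborFinset i).card : ℝ) - x i = 0 :=
          abs_eq_zero.mp (le_antisymm this (abs_nonneg _))
        have hne : ((G.neighborFinset i).card : ℝ) ≠ 0 := ne_of_gt (hcard i)
        have h1 : (∑ j ∈ G.neighborFinset i, x j) / ((G.neighborFinset i).card : ℝ) = x i :=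
          sub_eq_zero.mp h0
        rw [div_eq_iff hne] at h1
        exact h1
      have hnem : (Finset.univ : Finset (Fin n)).Nonempty := ⟨⟨0, by omega⟩, Finset.mem_univ _⟩
      obtain ⟨i0, -, hi0⟩ := Finset.exists_max_image Finset.univ x hnem
      set M := x i0 with hM
      have step : ∀ a b : Fin n, G.Adj a b → x a = M → x b = M := by
        intro a b hab hxa
        by_contra hne
        have hbN : b ∈ G.neighborFinset a := by
          rw [SimpleGraph.mem_neighborFinset]; exact hab
        have hlt : x b < M := lt_of_le_of_ne (hi0 b (Finset.mem_univ b)) hne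
        have hsumlt : (∑ j ∈ G.neighborFinset a, x j) < ∑ _j ∈ G.neighborFinset a, M :=
          Finset.sum_lt_sum (fun j _ => hi0 j (Finset.mem_univ j)) ⟨b, hbN, hlt⟩
        rw [Finset.sum_const, nsmul_eq_mul] at hsumlt
        rw [havg a, hxa] at hsumlt
        linarith [mul_comm M ((G.neighborFinset a).card : ℝ)]
      have key : ∀ a b : Fin n, G.Reachable a b → x a = M → x b = M := by
        intro a b hr
        obtain ⟨w⟩ := hr
        induction w with
        | nil => exact id
        | cons h p ih => exact fun hxa => ih (step _ _ h hxa)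
      exact ⟨M, funext fun i => key i0 i (hconn.preconnected i0 i) rfl⟩
    · rintro ⟨π, rfl⟩ i
      have hne : ((G.neighborFinset i).card : ℝ) ≠ 0 := ne_of_gt (hcard i)
      have : (∑ _j ∈ G.neighborFinset i, π) = π * ((G.neighborFinset i).card : ℝ) := by
        rw [Finset.sum_const, nsmul_eq_mul]; ring
      rw [this, mul_div_assoc, div_self hne, mul_one, sub_self, abs_zero, sub_self]
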